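/- arXiv:1310.3677 — 3 statements merged into one kernel-verified Lean document; each statement's English description precedes it below -/
import Mathlib

section
/- If the cost function c: X × Y → [0,∞] is lower semicontinuous on the product of two complete separable metric spaces, and there exists some transport plan with finite cost between μ ∈ P(X) and ν ∈ P(Y), then the Kantorovich problem inf{∫ c dγ : γ ∈ Γ(μ,ν)} admits a minimizer. -/
open MeasureTheory
open scoped ENNReal

section AuxiliaryLemmas

open Filter Set Topology TopologicalSpace


/-- Ulam tightness: a probability measure on a complete separable metric space is tight. -/
lemma aux_tight {X : Type*} [MetricSpace X] [CompleteSpace X] [SeparableSpace X]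
    [MeasurableSpace X] [OpensMeasurableSpace X] (μ : Measure X) [IsProbabilityMeasure μ]
    {ε : ℝ≥0∞} (hε : 0 < ε) : ∃ K : Set X, IsCompact K ∧ μ Kᶜ ≤ ε := by
  rcases isEmpty_or_nonempty X with hX | hX
  · refine ⟨∅, isCompact_empty, ?_⟩
    have : (∅ : Set X)ᶜ = (∅ : Set X) := by
      simp [eq_empty_of_isEmpty]
    rw [this]
    simp
  · set u : ℕ → X := TopologicalSpace.denseSeq X with hu
    have hdense : DenseRange u := TopologicalSpace.denseRange_denseSeq X
    -- the approximating closed sets at scale 1/(n+1)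
    set A : ℕ → ℕ → Set X := fun n N => ⋃ i < N, Metric.closedBall (u i) (1/(n+1))
    have hAclosed : ∀ n N, IsClosed (A n N) := by
      intro n N
      exact Set.Finite.isClosed_biUnion (Set.finite_Iio _) (fun i _ => Metric.isClosed_closedBall)
    have hAmeas : ∀ n N, MeasurableSet (A n N) := fun n N => (hAclosed n N).measurableSet
    have hAmono : ∀ n, Monotone (A n) := by
      intro n N M hNM
      apply Set.biUnion_subset_biUnion_left
      intro i hi
      exact lt_of_lt_of_le hi hNM
    have hAunion : ∀ n, ⋃ N, A n N = univ := by
      intro n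
      apply Set.eq_univ_of_forall
      intro x
      have hpos : (0:ℝ) < 1/(n+1) := by positivity
      obtain ⟨i, hi⟩ := Metric.denseRange_iff.1 hdense x _ hpos
      refine Set.mem_iUnion.2 ⟨i+1, Set.mem_biUnion (Nat.lt_succ_self i)
        (Metric.mem_closedBall.2 (le_of_lt (by simpa [dist_comm] using hi)))⟩
    have htend : ∀ n, Tendsto (fun N => μ (A n N)) atTop (𝓝 1) := by
      intro n
      have := tendsto_measure_iUnion_atTop (μ := μ) (hAmono n)
      rwa [hAunion n, measure_univ] at this
    -- choose N n with small complement
    have hchoice : ∀ n : ℕ, ∃ N, μ (A n N)ᶜ ≤ ε / 2 / 2 ^ n := by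
      intro n
      have hδpos : (0:ℝ≥0∞) < ε / 2 / 2 ^ n := by
        apply ENNReal.div_pos (ENNReal.div_pos hε.ne' (by norm_num)).ne'
        exact (by simp : (2:ℝ≥0∞)^n ≠ ⊤)
      have hlt : (1:ℝ≥0∞) - ε / 2 / 2 ^ n < 1 := by
        apply ENNReal.sub_lt_self (by norm_num) (by norm_num) hδpos.ne'
      have hev : ∀ᶠ N in atTop, (1:ℝ≥0∞) - ε / 2 / 2 ^ n < μ (A n N) :=
        (htend n).eventually_const_lt hlt
      obtain ⟨N, hN⟩ := hev.exists
      refine ⟨N, ?_⟩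
      have h1 : μ (A n N)ᶜ = 1 - μ (A n N) := prob_compl_eq_one_sub (hAmeas n N)
      rw [h1]
      rw [tsub_le_iff_right]
      calc (1:ℝ≥0∞) ≤ (1 - ε / 2 / 2 ^ n) + ε / 2 / 2 ^ n := le_tsub_add
        _ ≤ μ (A n N) + ε / 2 / 2 ^ n := add_le_add_left hN.le _
        _ = ε / 2 / 2 ^ n + μ (A n N) := add_comm _ _
    choose N hN using hchoice
    refine ⟨⋂ n, A n (N n), ?_, ?_⟩
    · apply TotallyBounded.isCompact_of_isClosed
      · rw [Metric.totallyBounded_iff]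
        intro δ hδ
        obtain ⟨n, hn⟩ := exists_nat_one_div_lt hδ
        refine ⟨u '' (Set.Iio (N n)), (Set.finite_Iio _).image u, ?_⟩
        intro x hx
        have hx' : x ∈ A n (N n) := Set.mem_iInter.1 hx n
        obtain ⟨i, hi, hxi⟩ := Set.mem_iUnion₂.1 hx'
        refine Set.mem_iUnion₂.2 ⟨u i, ⟨i, hi, rfl⟩, ?_⟩
        have : dist x (u i) ≤ 1/(n+1) := Metric.mem_closedBall.1 hxi
        exact Metric.mem_ball.2 (lt_of_le_of_lt this hn)
      · exact isClosed_iInter (fun n => hAclosed n (N n))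
    · have hsub : (⋂ n, A n (N n))ᶜ = ⋃ n, (A n (N n))ᶜ := by
        simp [Set.compl_iInter]
      rw [hsub]
      calc μ (⋃ n, (A n (N n))ᶜ) ≤ ∑' n, μ (A n (N n))ᶜ := measure_iUnion_le _
        _ ≤ ∑' n, ε / 2 / 2 ^ n := ENNReal.tsum_le_tsum (fun n => hN n)
        _ ≤ ε := by
            have : ∑' n : ℕ, ε / 2 / 2 ^ n = ε / 2 * ∑' n : ℕ, (2 : ℝ≥0∞)⁻¹ ^ n := by
              rw [← ENNReal.tsum_mul_left]
              congr 1
              funext n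
              rw [div_eq_mul_inv, ← ENNReal.inv_pow]
            rw [this, ENNReal.tsum_geometric]
            have h2 : ((1:ℝ≥0∞) - 2⁻¹)⁻¹ = 2 := by
              rw [ENNReal.one_sub_inv_two]; exact inv_inv _
            rw [h2, div_eq_mul_inv, mul_assoc,
              ENNReal.inv_mul_cancel (by norm_num) (by norm_num), mul_one]

/-- If a probability measure is dominated by another on open sets, they are equal
(on a metrizable Borel space). -/
lemma aux_eq_of_le_open {X : Type*} [MetricSpace X] [MeasurableSpace X] [BorelSpace X]
    (P Q : Measure X) [IsProbabilityMeasure P] [IsProbabilityMeasure Q]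
    (h : ∀ U : Set X, IsOpen U → P U ≤ Q U) : P = Q := by
  have hopen : ∀ U : Set X, IsOpen U → P U = Q U := by
    intro U hU
    refine le_antisymm (h U hU) ?_
    have hclosed : ∀ F : Set X, IsClosed F → Q F ≤ P F := by
      intro F hF
      have h1 : Q F = 1 - Q Fᶜ := by
        rw [← prob_compl_eq_one_sub hF.measurableSet.compl, compl_compl]
      have h2 : P F = 1 - P Fᶜ := by
        rw [← prob_compl_eq_one_sub hF.measurableSet.compl, compl_compl]
      rw [h1, h2]
      exact tsub_le_tsub_left (h Fᶜ hF.isOpen_compl) 1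
    have hreg := (MeasureTheory.Measure.WeaklyRegular.innerRegular (μ := Q)).measure_eq_iSup hU
    rw [hreg]
    refine iSup₂_le fun F hFU => iSup_le fun hF => ?_
    exact (hclosed F hF).trans (measure_mono hFU)
  refine MeasureTheory.ext_of_generate_finite {s : Set X | IsOpen s} ?_ isPiSystem_isOpen
    (fun s hs => hopen s hs) (by simp)
  borelize X
  exact BorelSpace.measurable_eq

end AuxiliaryLemmas

/-- Existence of an optimal transport plan for a lower semicontinuous cost on the
product of two complete separable metric spaces, provided some plan has finite cost. -/
theorem exists_optimal_plan
    {X Y : Type*} [MetricSpace X] [CompleteSpace X] [TopologicalSpace.SeparableSpace X]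
    [MeasurableSpace X] [BorelSpace X]
    [MetricSpace Y] [CompleteSpace Y] [TopologicalSpace.SeparableSpace Y]
    [MeasurableSpace Y] [BorelSpace Y]
    (c : X × Y → ℝ≥0∞) (hc : LowerSemicontinuous c)
    (μ : Measure X) (ν : Measure Y) [IsProbabilityMeasure μ] [IsProbabilityMeasure ν]
    (hfin : ∃ γ : Measure (X × Y),
      γ.map Prod.fst = μ ∧ γ.map Prod.snd = ν ∧ ∫⁻ p, c p ∂γ < ⊤) :
    ∃ γ₀ : Measure (X × Y), γ₀.map Prod.fst = μ ∧ γ₀.map Prod.snd = ν ∧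
      ∀ γ : Measure (X × Y), γ.map Prod.fst = μ → γ.map Prod.snd = ν →
        ∫⁻ p, c p ∂γ₀ ≤ ∫⁻ p, c p ∂γ := by
  open Filter Set Topology TopologicalSpace in
  classical
  -- minimizing sequence
  set S : Set ℝ≥0∞ := {r | ∃ γ : Measure (X × Y),
      γ.map Prod.fst = μ ∧ γ.map Prod.snd = ν ∧ ∫⁻ p, c p ∂γ = r} with hSdef
  obtain ⟨γw, hw1, hw2, -⟩ := hfin
  have hSne : S.Nonempty := ⟨_, γw, hw1, hw2, rfl⟩
  obtain ⟨u, -, huI, huS⟩ := exists_seq_tendsto_sInf hSne (OrderBot.bddBelow S)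
  choose γ hγ1 hγ2 hγ3 using huS
  have hIle : ∀ γ' : Measure (X × Y), γ'.map Prod.fst = μ → γ'.map Prod.snd = ν →
      sInf S ≤ ∫⁻ p, c p ∂γ' := fun γ' h1 h2 => sInf_le ⟨γ', h1, h2, rfl⟩
  have hprob : ∀ n, IsProbabilityMeasure (γ n) := by
    intro n
    constructor
    rw [← measure_univ (μ := μ), ← hγ1 n,
      Measure.map_apply measurable_fst MeasurableSet.univ, Set.preimage_univ]
  have hcost : Tendsto (fun n => ∫⁻ p, c p ∂(γ n)) atTop (𝓝 (sInf S)) := by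
    have : (fun n => ∫⁻ p, c p ∂(γ n)) = u := funext hγ3
    rwa [this]
  have hmargfst : ∀ n (A : Set X), MeasurableSet A → γ n (Prod.fst ⁻¹' A) = μ A := by
    intro n A hA
    rw [← hγ1 n, Measure.map_apply measurable_fst hA]
  have hmargsnd : ∀ n (B : Set Y), MeasurableSet B → γ n (Prod.snd ⁻¹' B) = ν B := by
    intro n B hB
    rw [← hγ2 n, Measure.map_apply measurable_snd hB]
  -- ultrafilter limits
  set F : Ultrafilter ℕ := Filter.hyperfilter ℕ with hFdef
  have hFle : (F : Filter ℕ) ≤ atTop := Nat.hyperfilter_le_atTop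
  have limex : ∀ A : Set (X × Y), ∃ a : ℝ≥0∞,
      Tendsto (fun n => γ n A) (F : Filter ℕ) (𝓝 a) := by
    intro A
    obtain ⟨a, -, ha⟩ := isCompact_univ.ultrafilter_le_nhds (F.map fun n => γ n A)
      (by rw [le_principal_iff]; exact univ_mem)
    exact ⟨a, by rwa [Ultrafilter.coe_map] at ha⟩
  choose al hal using limex
  have hal_mono : ∀ {A B : Set (X × Y)}, A ⊆ B → al A ≤ al B := fun {A B} h =>
    le_of_tendsto_of_tendsto' (hal A) (hal B) (fun n => measure_mono h)
  have hal_univ : al Set.univ = 1 := by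
    refine tendsto_nhds_unique (hal _) ?_
    have : (fun n => γ n Set.univ) = fun _ => (1 : ℝ≥0∞) := by
      funext n
      have := hprob n
      simp
    rw [this]
    exact tendsto_const_nhds
  have hal_add : ∀ {A B : Set (X × Y)}, MeasurableSet B → Disjoint A B →
      al (A ∪ B) = al A + al B := by
    intro A B hB hd
    refine tendsto_nhds_unique (hal _) ?_
    have : (fun n => γ n (A ∪ B)) = fun n => γ n A + γ n B := by
      funext n
      exact measure_union hd hB
    rw [this]
    exact ((hal A).add (hal B))
  have hal_fst : ∀ (A : Set X), MeasurableSet A → al (Prod.fst ⁻¹' A) = μ A := by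
    intro A hA
    refine tendsto_nhds_unique (hal _) ?_
    have : (fun n => γ n (Prod.fst ⁻¹' A)) = fun _ => μ A := funext fun n => hmargfst n A hA
    rw [this]; exact tendsto_const_nhds
  have hal_snd : ∀ (B : Set Y), MeasurableSet B → al (Prod.snd ⁻¹' B) = ν B := by
    intro B hB
    refine tendsto_nhds_unique (hal _) ?_
    have : (fun n => γ n (Prod.snd ⁻¹' B)) = fun _ => ν B := funext fun n => hmargsnd n B hB
    rw [this]; exact tendsto_const_nhds
  -- uniform tightness
  have htight : ∀ ε : ℝ≥0∞, 0 < ε → ∃ T : Set (X × Y), IsCompact T ∧ ∀ n, γ n Tᶜ ≤ ε := by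
    intro ε hε
    have hε2 : (0:ℝ≥0∞) < ε / 2 := ENNReal.div_pos hε.ne' (by norm_num)
    obtain ⟨K, hK, hKm⟩ := aux_tight μ hε2
    obtain ⟨L, hL, hLm⟩ := aux_tight ν hε2
    refine ⟨K ×ˢ L, hK.prod hL, fun n => ?_⟩
    have hsub : (K ×ˢ L)ᶜ ⊆ (Prod.fst ⁻¹' Kᶜ) ∪ (Prod.snd ⁻¹' Lᶜ) := by
      intro z hz
      by_cases h1 : z.1 ∈ K
      · right
        intro h2
        exact hz ⟨h1, h2⟩
      · left; exact h1
    calc γ n (K ×ˢ L)ᶜ ≤ γ n ((Prod.fst ⁻¹' Kᶜ) ∪ (Prod.snd ⁻¹' Lᶜ)) := measure_mono hsub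
      _ ≤ γ n (Prod.fst ⁻¹' Kᶜ) + γ n (Prod.snd ⁻¹' Lᶜ) := measure_union_le _ _
      _ = μ Kᶜ + ν Lᶜ := by
          rw [hmargfst n _ hK.isClosed.measurableSet.compl,
            hmargsnd n _ hL.isClosed.measurableSet.compl]
      _ ≤ ε / 2 + ε / 2 := add_le_add hKm hLm
      _ = ε := ENNReal.add_halves ε
  -- the content
  set lam : Set (X × Y) → ℝ≥0∞ :=
    fun K => ⨅ (U : Set (X × Y)) (_ : IsOpen U) (_ : K ⊆ U), al U with hlamdef
  have lam_le : ∀ {K U : Set (X × Y)}, IsOpen U → K ⊆ U → lam K ≤ al U := by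
    intro K U hU hKU
    exact iInf_le_of_le U (iInf_le_of_le hU (iInf_le _ hKU))
  have lam_le_one : ∀ K, lam K ≤ 1 :=
    fun K => (lam_le isOpen_univ (Set.subset_univ K)).trans hal_univ.le
  have lam_ne_top : ∀ K, lam K ≠ ⊤ :=
    fun K => ((lam_le_one K).trans_lt ENNReal.one_lt_top).ne
  have lam_mono : ∀ {K K' : Set (X × Y)}, K ⊆ K' → lam K ≤ lam K' := by
    intro K K' h
    refine le_iInf fun U => le_iInf fun hU => le_iInf fun hKU => lam_le hU (h.trans hKU)
  have lam_exists : ∀ (K : Set (X × Y)) (ε : ℝ≥0∞), 0 < ε →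
      ∃ U : Set (X × Y), IsOpen U ∧ K ⊆ U ∧ al U ≤ lam K + ε := by
    intro K ε hε
    have hlt : lam K < lam K + ε := ENNReal.lt_add_right (lam_ne_top K) hε.ne'
    conv_lhs at hlt => rw [hlamdef]
    simp only [iInf_lt_iff] at hlt
    obtain ⟨U, hU, hKU, hU2⟩ := hlt
    exact ⟨U, hU, hKU, hU2.le⟩
  have lam_union_le : ∀ (K K' : Set (X × Y)), lam (K ∪ K') ≤ lam K + lam K' := by
    intro K K'
    refine ENNReal.le_of_forall_pos_le_add fun ε hε _ => ?_
    have hε2 : (0:ℝ≥0∞) < ε / 2 := ENNReal.div_pos (by exact_mod_cast hε.ne') (by norm_num)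
    obtain ⟨U, hU, hKU, hU2⟩ := lam_exists K _ hε2
    obtain ⟨V, hV, hKV, hV2⟩ := lam_exists K' _ hε2
    calc lam (K ∪ K') ≤ al (U ∪ V) := lam_le (hU.union hV) (Set.union_subset_union hKU hKV)
      _ ≤ al U + al V := by
          refine le_of_tendsto_of_tendsto' (hal _) ((hal U).add (hal V)) fun n => ?_
          exact measure_union_le _ _
      _ ≤ (lam K + ε / 2) + (lam K' + ε / 2) := add_le_add hU2 hV2
      _ = lam K + lam K' + (ε / 2 + ε / 2) := by ring
      _ = lam K + lam K' + ε := by rw [ENNReal.add_halves]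
  have lam_union_eq : ∀ (K K' : Set (X × Y)), IsCompact K → IsCompact K' → Disjoint K K' →
      lam (K ∪ K') = lam K + lam K' := by
    intro K K' hK hK' hd
    refine le_antisymm (lam_union_le K K') ?_
    obtain ⟨V, W, hV, hW, hKV, hKW, hVW⟩ :=
      SeparatedNhds.of_isCompact_isCompact_isClosed hK hK' hK'.isClosed hd
    refine le_iInf fun U => le_iInf fun hU => le_iInf fun hKU => ?_
    have h1 : lam K ≤ al (U ∩ V) :=
      lam_le (hU.inter hV) (Set.subset_inter ((Set.subset_union_left).trans hKU) hKV)
    have h2 : lam K' ≤ al (U ∩ W) :=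
      lam_le (hU.inter hW) (Set.subset_inter ((Set.subset_union_right).trans hKU) hKW)
    calc lam K + lam K' ≤ al (U ∩ V) + al (U ∩ W) := add_le_add h1 h2
      _ = al ((U ∩ V) ∪ (U ∩ W)) :=
          (hal_add ((hU.inter hW).measurableSet)
            ((hVW.mono Set.inter_subset_right Set.inter_subset_right))).symm
      _ ≤ al U := hal_mono (by intro z hz; rcases hz with h | h <;> exact h.1)
  -- bundle into a Content
  set C : Content (X × Y) :=
    { toFun := fun K => (lam K).toNNReal
      mono' := fun K₁ K₂ h =>
        ENNReal.toNNReal_mono (lam_ne_top _) (lam_mono h)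
      sup_disjoint' := by
        intro K₁ K₂ hd _ _
        have hu := lam_union_eq K₁ K₂ K₁.2 K₂.2 hd
        show (lam ↑(K₁ ⊔ K₂)).toNNReal = (lam ↑K₁).toNNReal + (lam ↑K₂).toNNReal
        rw [Compacts.coe_sup, hu, ENNReal.toNNReal_add (lam_ne_top _) (lam_ne_top _)]
      sup_le' := by
        intro K₁ K₂
        show (lam ↑(K₁ ⊔ K₂)).toNNReal ≤ (lam ↑K₁).toNNReal + (lam ↑K₂).toNNReal
        rw [← ENNReal.toNNReal_add (lam_ne_top _) (lam_ne_top _), Compacts.coe_sup]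
        exact ENNReal.toNNReal_mono
          (ENNReal.add_ne_top.2 ⟨lam_ne_top _, lam_ne_top _⟩) (lam_union_le _ _) }
    with hCdef
  have hCK : ∀ K : Compacts (X × Y), (C K : ℝ≥0∞) = lam K := by
    intro K
    rw [hCdef]
    exact ENNReal.coe_toNNReal (lam_ne_top _)
  set γ₀ : Measure (X × Y) := C.measure with hγ₀def
  -- γ₀ is dominated by al on open sets
  have h0 : ∀ U : Set (X × Y), IsOpen U → γ₀ U ≤ al U := by
    intro U hU
    rw [hγ₀def, C.measure_apply hU.measurableSet, C.outerMeasure_of_isOpen U hU]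
    refine iSup_le fun K => iSup_le fun hK => ?_
    rw [hCK]
    exact lam_le hU hK
  -- γ₀ is a probability measure
  have h1 : γ₀ Set.univ = 1 := by
    refine le_antisymm (by simpa [hal_univ] using h0 Set.univ isOpen_univ) ?_
    refine ENNReal.le_of_forall_pos_le_add fun ε hε _ => ?_
    obtain ⟨T, hT, hTc⟩ := htight ε (by exact_mod_cast hε)
    have hTlam : (1:ℝ≥0∞) - ε ≤ lam T := by
      refine le_iInf fun U => le_iInf fun hU => le_iInf fun hTU => ?_
      refine ge_of_tendsto (hal U) (Eventually.of_forall fun n => ?_)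
      have h2 : γ n T ≤ γ n U := measure_mono hTU
      have h3 : (1:ℝ≥0∞) - ε ≤ γ n T := by
        have hcompl : γ n T = 1 - γ n Tᶜ := by
          have := hprob n
          rw [← prob_compl_eq_one_sub hT.isClosed.measurableSet.compl, compl_compl]
        rw [hcompl]
        exact tsub_le_tsub_left (hTc n) 1
      exact h3.trans h2
    have hinner : lam T ≤ γ₀ Set.univ := by
      rw [hγ₀def, C.measure_apply MeasurableSet.univ,
        C.outerMeasure_of_isOpen Set.univ isOpen_univ]
      have := C.le_innerContent ⟨T, hT⟩ ⟨Set.univ, isOpen_univ⟩ (Set.subset_univ T)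
      rwa [hCK] at this
    calc (1:ℝ≥0∞) ≤ (1 - ε) + ε := le_tsub_add
      _ ≤ lam T + ε := add_le_add_left hTlam _
      _ ≤ γ₀ Set.univ + ε := add_le_add_left hinner _
  have hγ₀prob : IsProbabilityMeasure γ₀ := ⟨h1⟩
  -- marginals
  have hfst : γ₀.map Prod.fst = μ := by
    have : IsProbabilityMeasure (γ₀.map Prod.fst) :=
      Measure.isProbabilityMeasure_map measurable_fst.aemeasurable
    refine aux_eq_of_le_open _ _ fun U hU => ?_
    rw [Measure.map_apply measurable_fst hU.measurableSet]
    calc γ₀ (Prod.fst ⁻¹' U) ≤ al (Prod.fst ⁻¹' U) :=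
          h0 _ (hU.preimage continuous_fst)
      _ = μ U := hal_fst U hU.measurableSet
  have hsnd : γ₀.map Prod.snd = ν := by
    have : IsProbabilityMeasure (γ₀.map Prod.snd) :=
      Measure.isProbabilityMeasure_map measurable_snd.aemeasurable
    refine aux_eq_of_le_open _ _ fun U hU => ?_
    rw [Measure.map_apply measurable_snd hU.measurableSet]
    calc γ₀ (Prod.snd ⁻¹' U) ≤ al (Prod.snd ⁻¹' U) :=
          h0 _ (hU.preimage continuous_snd)
      _ = ν U := hal_snd U hU.measurableSet
  refine ⟨γ₀, hfst, hsnd, fun γ' h1' h2' => le_trans ?_ (hIle γ' h1' h2')⟩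
  -- remains: cost of γ₀ is at most sInf S
  have hcmeas : Measurable c := hc.measurable
  set Uq : ℚ → Set (X × Y) := fun q => {z | ENNReal.ofReal q < c z} with hUqdef
  have hUq_open : ∀ q, IsOpen (Uq q) := fun q => hc.isOpen_preimage _
  set v : ℕ → ℚ → ℝ≥0∞ := fun n q => γ n (Uq q) with hvdef
  set a : ℚ → ℝ≥0∞ := fun q => al (Uq q) with hadef
  have hva : Tendsto v (F : Filter ℕ) (𝓝 a) := tendsto_pi_nhds.2 fun q => hal _
  have hcluster : MapClusterPt a atTop v := by
    have h1 : (F : Filter ℕ).map v ≤ 𝓝 a := hva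
    have h2 : (F : Filter ℕ).map v ≤ atTop.map v := map_mono hFle
    exact neBot_of_le (le_inf h1 h2)
  obtain ⟨ψ, hψ, hψtend⟩ := TopologicalSpace.FirstCountableTopology.tendsto_subseq hcluster
  have hq : ∀ q : ℚ, Tendsto (fun k => γ (ψ k) (Uq q)) atTop (𝓝 (a q)) :=
    fun q => tendsto_pi_nhds.1 hψtend q
  have hcost' : Tendsto (fun k => ∫⁻ p, c p ∂(γ (ψ k))) atTop (𝓝 (sInf S)) :=
    hcost.comp hψ.tendsto_atTop
  -- key liminf inequality on superlevel sets
  have hkey : ∀ t : ℝ, 0 < t → γ₀ {z | ENNReal.ofReal t < c z}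
      ≤ atTop.liminf (fun k => γ (ψ k) {z | ENNReal.ofReal t < c z}) := by
    intro t ht
    have hunion : {z | ENNReal.ofReal t < c z} = ⋃ q : {q : ℚ // t < (q:ℝ)}, Uq q := by
      ext z
      constructor
      · intro hz
        rcases eq_or_ne (c z) ⊤ with hcz | hcz
        · obtain ⟨q, hq1⟩ := exists_rat_gt t
          refine Set.mem_iUnion.2 ⟨⟨q, hq1⟩, ?_⟩
          show ENNReal.ofReal q < c z
          rw [hcz]
          exact ENNReal.ofReal_lt_top
        · have h1 : t < (c z).toReal := (ENNReal.ofReal_lt_iff_lt_toReal ht.le hcz).1 hz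
          obtain ⟨q, hq1, hq2⟩ := exists_rat_btwn h1
          refine Set.mem_iUnion.2 ⟨⟨q, hq1⟩, ?_⟩
          exact (ENNReal.ofReal_lt_iff_lt_toReal (ht.trans hq1).le hcz).2 hq2
      · intro hz
        obtain ⟨⟨q, hq1⟩, hz⟩ := Set.mem_iUnion.1 hz
        exact lt_of_le_of_lt (ENNReal.ofReal_le_ofReal hq1.le) hz
    have hdir : Directed (· ⊆ ·) (fun q : {q : ℚ // t < (q:ℝ)} => Uq q) := by
      rintro ⟨q₁, hq₁⟩ ⟨q₂, hq₂⟩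
      refine ⟨⟨min q₁ q₂, by push_cast; exact lt_min hq₁ hq₂⟩, ?_, ?_⟩
      · intro z hz
        exact lt_of_le_of_lt (ENNReal.ofReal_le_ofReal (by exact_mod_cast min_le_left q₁ q₂)) hz
      · intro z hz
        exact lt_of_le_of_lt (ENNReal.ofReal_le_ofReal (by exact_mod_cast min_le_right q₁ q₂)) hz
    have hmeq : γ₀ {z | ENNReal.ofReal t < c z} = ⨆ q : {q : ℚ // t < (q:ℝ)}, γ₀ (Uq q) := by
      rw [hunion, hdir.measure_iUnion]
    rw [hmeq]
    refine iSup_le fun q => ?_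
    calc γ₀ (Uq q) ≤ al (Uq q) := h0 _ (hUq_open _)
      _ = atTop.liminf (fun k => γ (ψ k) (Uq q)) := ((hq q).liminf_eq).symm
      _ ≤ atTop.liminf (fun k => γ (ψ k) {z | ENNReal.ofReal t < c z}) := by
          refine liminf_le_liminf (Eventually.of_forall fun k => measure_mono ?_)
          intro z hz
          exact lt_of_le_of_lt (ENNReal.ofReal_le_ofReal q.2.le) hz
  -- truncations
  have main : ∀ m : ℕ, ∫⁻ z, min (c z) (m : ℝ≥0∞) ∂γ₀ ≤ sInf S := by
    intro m
    set g : X × Y → ℝ := fun z => (min (c z) (m : ℝ≥0∞)).toReal with hgdef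
    have hg_nonneg : ∀ z, 0 ≤ g z := fun z => ENNReal.toReal_nonneg
    have hgmeas : Measurable g := (hcmeas.min measurable_const).ennreal_toReal
    have hmin_ne_top : ∀ z, min (c z) (m : ℝ≥0∞) ≠ ⊤ :=
      fun z => ((min_le_right _ _).trans_lt (ENNReal.natCast_lt_top m)).ne
    have hofg : ∀ z, ENNReal.ofReal (g z) = min (c z) (m : ℝ≥0∞) :=
      fun z => ENNReal.ofReal_toReal (hmin_ne_top z)
    have hlayer : ∀ ρ : Measure (X × Y), ∫⁻ z, min (c z) (m : ℝ≥0∞) ∂ρ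
        = ∫⁻ t in Set.Ioi (0:ℝ), ρ {z | t < g z} := by
      intro ρ
      rw [← lintegral_eq_lintegral_meas_lt ρ (Eventually.of_forall hg_nonneg)
        hgmeas.aemeasurable]
      exact lintegral_congr fun z => (hofg z).symm
    have hsetid : ∀ t : ℝ, 0 < t →
        {z | t < g z} = if ENNReal.ofReal t < (m : ℝ≥0∞)
          then {z | ENNReal.ofReal t < c z} else ∅ := by
      intro t ht
      split_ifs with h
      · ext z
        show t < g z ↔ _
        rw [hgdef]
        simp only
        rw [← ENNReal.ofReal_lt_iff_lt_toReal ht.le (hmin_ne_top z), lt_min_iff]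
        exact ⟨fun hh => hh.1, fun hh => ⟨hh, h⟩⟩
      · ext z
        simp only [Set.mem_empty_iff_false, iff_false, Set.mem_setOf_eq, not_lt]
        have h' : (m : ℝ≥0∞) ≤ ENNReal.ofReal t := not_lt.1 h
        calc g z ≤ ((m : ℝ≥0∞)).toReal :=
              ENNReal.toReal_mono (by simp) (min_le_right _ _)
          _ ≤ (ENNReal.ofReal t).toReal := ENNReal.toReal_mono ENNReal.ofReal_ne_top h'
          _ = t := ENNReal.toReal_ofReal ht.le
    have hpt : ∀ t ∈ Set.Ioi (0:ℝ), γ₀ {z | t < g z}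
        ≤ atTop.liminf (fun k => γ (ψ k) {z | t < g z}) := by
      intro t ht
      by_cases h : ENNReal.ofReal t < (m : ℝ≥0∞)
      · rw [hsetid t ht]
        simp only [if_pos h]
        exact hkey t ht
      · rw [hsetid t ht]
        simp only [if_neg h]
        simp
    calc ∫⁻ z, min (c z) (m : ℝ≥0∞) ∂γ₀
        = ∫⁻ t in Set.Ioi (0:ℝ), γ₀ {z | t < g z} := hlayer γ₀
      _ ≤ ∫⁻ t in Set.Ioi (0:ℝ), atTop.liminf (fun k => γ (ψ k) {z | t < g z}) :=
          setLIntegral_mono' measurableSet_Ioi hpt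
      _ ≤ atTop.liminf (fun k => ∫⁻ t in Set.Ioi (0:ℝ), γ (ψ k) {z | t < g z}) :=
          lintegral_liminf_le (fun k => Antitone.measurable
            (fun s t hst => measure_mono (fun z hz => lt_of_le_of_lt hst hz)))
      _ = atTop.liminf (fun k => ∫⁻ z, min (c z) (m : ℝ≥0∞) ∂(γ (ψ k))) := by
          congr 1
          funext k
          exact (hlayer (γ (ψ k))).symm
      _ ≤ atTop.liminf (fun k => ∫⁻ z, c z ∂(γ (ψ k))) :=
          liminf_le_liminf (Eventually.of_forall fun k =>
            lintegral_mono fun z => min_le_left _ _)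
      _ = sInf S := hcost'.liminf_eq
  -- monotone convergence in the truncation
  have hmono : Monotone (fun m : ℕ => fun z : X × Y => min (c z) (m : ℝ≥0∞)) := by
    intro m m' h z
    exact min_le_min le_rfl (by exact_mod_cast Nat.cast_le.2 h)
  have hsupmin : ∀ z : X × Y, (⨆ m : ℕ, min (c z) (m : ℝ≥0∞)) = c z := by
    intro z
    refine le_antisymm (iSup_le fun m => min_le_left _ _) ?_
    rcases eq_or_ne (c z) ⊤ with h | h
    · rw [h]
      have heq : (⨆ m : ℕ, min (⊤:ℝ≥0∞) (m:ℝ≥0∞)) = ⨆ m : ℕ, (m:ℝ≥0∞) :=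
        iSup_congr fun m => min_eq_right le_top
      rw [heq, ENNReal.iSup_natCast]
    · obtain ⟨m, hm⟩ := ENNReal.exists_nat_gt h
      refine le_iSup_of_le m ?_
      rw [min_eq_left hm.le]
  calc ∫⁻ p, c p ∂γ₀ = ∫⁻ z, ⨆ m : ℕ, min (c z) (m : ℝ≥0∞) ∂γ₀ :=
        lintegral_congr fun z => (hsupmin z).symm
    _ = ⨆ m : ℕ, ∫⁻ z, min (c z) (m : ℝ≥0∞) ∂γ₀ :=
        lintegral_iSup (fun m => hcmeas.min measurable_const) hmono
    _ ≤ sInf S := iSup_le main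
end

section
/- In dimension one, the functional ℒ[μ] = η ∫∫_{ℝ×ℝ} |x - y| dμ(x)dμ(y) is geodesically affine along Wasserstein geodesics: if μ_θ = ((1-θ)π¹ + θπ²)_# γ for γ an optimal plan between μ¹, μ² ∈ P₂(ℝ), then ℒ[μ_θ] = (1-θ)ℒ[μ¹] + θℒ[μ²] for all θ ∈ [0,1]. In particular ℒ is geodesically convex for every η ∈ ℝ. -/
open MeasureTheory
open scoped ENNReal

noncomputable def sqW2 {E : Type*} [MeasurableSpace E] [PseudoMetricSpace E]
    (μ ν : Measure E) : ℝ≥0∞ :=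
  ⨅ (γ : Measure (E × E)) (_ : γ.map Prod.fst = μ) (_ : γ.map Prod.snd = ν),
    ∫⁻ p, ENNReal.ofReal (dist p.1 p.2 ^ 2) ∂γ

/-- The functional `ℒ[μ] = η ∫∫ |x - y| dμ(x) dμ(y)`. -/
noncomputable def Lfun (η : ℝ) (μ : Measure ℝ) : ℝ :=
  η * ∫ p, |p.1 - p.2| ∂(μ.prod μ)

namespace LfunAux

noncomputable def Wcost (γ : Measure (ℝ × ℝ)) : ℝ≥0∞ :=
  ∫⁻ p, ENNReal.ofReal (dist p.1 p.2 ^ 2) ∂γ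

lemma measurable_costFn : Measurable (fun p : ℝ × ℝ => ENNReal.ofReal (dist p.1 p.2 ^ 2)) := by
  measurability

lemma ofReal_sq (x : ℝ) : ENNReal.ofReal (x ^ 2) = (‖x‖₊ : ℝ≥0∞) ^ 2 := by
  rw [← sq_abs, ENNReal.ofReal_pow (abs_nonneg x), ← Real.norm_eq_abs, ← coe_nnnorm, ENNReal.ofReal_coe_nnreal]

lemma abs_lin {s t a b : ℝ} (hs : 0 ≤ s) (ht : 0 ≤ t) (hab : 0 ≤ a * b) :
    |s * a + t * b| = s * |a| + t * |b| := by
  rcases mul_nonneg_iff.mp hab with ⟨ha, hb⟩ | ⟨ha, hb⟩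
  · rw [abs_of_nonneg ha, abs_of_nonneg hb,
      abs_of_nonneg (add_nonneg (mul_nonneg hs ha) (mul_nonneg ht hb))]
  · rw [abs_of_nonpos ha, abs_of_nonpos hb,
      abs_of_nonpos (add_nonpos (mul_nonpos_of_nonneg_of_nonpos hs ha)
        (mul_nonpos_of_nonneg_of_nonpos ht hb))]
    ring

lemma prod_bad_null (μ₁ μ₂ : Measure ℝ) [IsProbabilityMeasure μ₁] [IsProbabilityMeasure μ₂]
    (γ : Measure (ℝ × ℝ)) [IsProbabilityMeasure γ]
    (hγ₁ : γ.map Prod.fst = μ₁) (hγ₂ : γ.map Prod.snd = μ₂)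
    (hfin : Wcost γ < ⊤)
    (hopt : ∀ γ' : Measure (ℝ × ℝ), γ'.map Prod.fst = μ₁ → γ'.map Prod.snd = μ₂ →
      Wcost γ ≤ Wcost γ') :
    (γ.prod γ) {z : (ℝ × ℝ) × (ℝ × ℝ) | (z.1.1 - z.2.1) * (z.1.2 - z.2.2) < 0} = 0 := by
  by_contra hB0
  set B : Set ((ℝ × ℝ) × (ℝ × ℝ)) :=
    {z | (z.1.1 - z.2.1) * (z.1.2 - z.2.2) < 0} with hBdef
  have hB : MeasurableSet B := by
    have : Measurable (fun z : (ℝ × ℝ) × (ℝ × ℝ) => (z.1.1 - z.2.1) * (z.1.2 - z.2.2)) :=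
      ((measurable_fst.fst.sub measurable_snd.fst).mul (measurable_fst.snd.sub measurable_snd.snd))
    exact measurableSet_lt this measurable_const
  set β := (γ.prod γ).restrict B with hβdef
  have hβuniv : β Set.univ = (γ.prod γ) B := by
    rw [hβdef, Measure.restrict_apply_univ]
  -- the swap maps
  set S₁ : (ℝ × ℝ) × (ℝ × ℝ) → ℝ × ℝ := fun z => (z.1.1, z.2.2) with hS₁def
  set S₂ : (ℝ × ℝ) × (ℝ × ℝ) → ℝ × ℝ := fun z => (z.2.1, z.1.2) with hS₂def
  have hmS₁ : Measurable S₁ := (measurable_fst.fst).prodMk (measurable_snd.snd)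
  have hmS₂ : Measurable S₂ := (measurable_snd.fst).prodMk (measurable_fst.snd)
  set m₁ : Measure (ℝ × ℝ) := (2⁻¹ : ℝ≥0∞) • (β.map Prod.fst + β.map Prod.snd) with hm₁def
  set m₂ : Measure (ℝ × ℝ) := (2⁻¹ : ℝ≥0∞) • (β.map S₁ + β.map S₂) with hm₂def
  have hmapfst : (γ.prod γ).map Prod.fst = γ := by
    simp [Measure.map_fst_prod]
  have hmapsnd : (γ.prod γ).map Prod.snd = γ := by
    simp [Measure.map_snd_prod]
  have hle1 : β.map Prod.fst ≤ γ := by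
    rw [← hmapfst]; exact Measure.map_mono Measure.restrict_le_self measurable_fst
  have hle2 : β.map Prod.snd ≤ γ := by
    rw [← hmapsnd]; exact Measure.map_mono Measure.restrict_le_self measurable_snd
  have hm₁γ : m₁ ≤ γ := by
    rw [Measure.le_iff]
    intro s hs
    have h1 := hle1 s
    have h2 := hle2 s
    simp only [hm₁def, Measure.smul_apply, Measure.add_apply, smul_eq_mul]
    calc 2⁻¹ * (β.map Prod.fst s + β.map Prod.snd s) ≤ 2⁻¹ * (γ s + γ s) := by
          gcongr
      _ = γ s := by
          rw [← two_mul, ← mul_assoc, ENNReal.inv_mul_cancel (by norm_num) (by norm_num), one_mul]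
  have hfinm₁ : IsFiniteMeasure m₁ := by
    constructor
    calc m₁ Set.univ ≤ γ Set.univ := hm₁γ Set.univ
      _ < ⊤ := measure_lt_top γ _
  set γ' : Measure (ℝ × ℝ) := (γ - m₁) + m₂ with hγ'def
  have hsub : (γ - m₁) + m₁ = γ := Measure.sub_add_cancel_of_le hm₁γ
  -- marginals of m₁ and m₂ agree
  have hfstm : m₂.map Prod.fst = m₁.map Prod.fst := by
    rw [hm₁def, hm₂def, Measure.map_smul, Measure.map_smul,
      Measure.map_add _ _ measurable_fst, Measure.map_add _ _ measurable_fst,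
      Measure.map_map measurable_fst hmS₁, Measure.map_map measurable_fst hmS₂,
      Measure.map_map measurable_fst measurable_fst,
      Measure.map_map measurable_fst measurable_snd]
    rfl
  have hsndm : m₂.map Prod.snd = m₁.map Prod.snd := by
    rw [hm₁def, hm₂def, Measure.map_smul, Measure.map_smul,
      Measure.map_add _ _ measurable_snd, Measure.map_add _ _ measurable_snd,
      Measure.map_map measurable_snd hmS₁, Measure.map_map measurable_snd hmS₂,
      Measure.map_map measurable_snd measurable_fst,
      Measure.map_map measurable_snd measurable_snd]
    have e1 : (Prod.snd ∘ S₁ : (ℝ × ℝ) × ℝ × ℝ → ℝ) = Prod.snd ∘ Prod.snd := rfl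
    have e2 : (Prod.snd ∘ S₂ : (ℝ × ℝ) × ℝ × ℝ → ℝ) = Prod.snd ∘ Prod.fst := rfl
    rw [e1, e2, add_comm]
  -- γ' has the right marginals
  have hγ'fst : γ'.map Prod.fst = μ₁ := by
    rw [hγ'def, Measure.map_add _ _ measurable_fst, hfstm, ← Measure.map_add _ _ measurable_fst,
      hsub, hγ₁]
  have hγ'snd : γ'.map Prod.snd = μ₂ := by
    rw [hγ'def, Measure.map_add _ _ measurable_snd, hsndm, ← Measure.map_add _ _ measurable_snd,
      hsub, hγ₂]
  -- cost computations
  set c : ℝ × ℝ → ℝ≥0∞ := fun p => ENNReal.ofReal (dist p.1 p.2 ^ 2) with hcdef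
  have hcm : Measurable c := measurable_costFn
  set F : (ℝ × ℝ) × ℝ × ℝ → ℝ := fun z => dist z.1.1 z.1.2 ^ 2 + dist z.2.1 z.2.2 ^ 2 with hFdef
  set G : (ℝ × ℝ) × ℝ × ℝ → ℝ := fun z => dist z.1.1 z.2.2 ^ 2 + dist z.2.1 z.1.2 ^ 2 with hGdef
  set D : (ℝ × ℝ) × ℝ × ℝ → ℝ := fun z => -(2 * ((z.1.1 - z.2.1) * (z.1.2 - z.2.2))) with hDdef
  have hFm : Measurable fun z => ENNReal.ofReal (F z) := by
    apply ENNReal.measurable_ofReal.comp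
    apply Measurable.add <;> apply Measurable.pow _ measurable_const
    · exact (measurable_fst.fst.dist measurable_fst.snd)
    · exact (measurable_snd.fst.dist measurable_snd.snd)
  have hGm : Measurable fun z => ENNReal.ofReal (G z) := by
    apply ENNReal.measurable_ofReal.comp
    apply Measurable.add <;> apply Measurable.pow _ measurable_const
    · exact (measurable_fst.fst.dist measurable_snd.snd)
    · exact (measurable_snd.fst.dist measurable_fst.snd)
  have hDm : Measurable fun z => ENNReal.ofReal (D z) := by
    apply ENNReal.measurable_ofReal.comp
    exact (((measurable_fst.fst.sub measurable_snd.fst).mul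
      (measurable_fst.snd.sub measurable_snd.snd)).const_mul 2).neg
  have hcostm₁ : Wcost m₁ = 2⁻¹ * ∫⁻ z, ENNReal.ofReal (F z) ∂β := by
    rw [Wcost, hm₁def, lintegral_smul_measure, lintegral_add_measure,
      lintegral_map hcm measurable_fst, lintegral_map hcm measurable_snd,
      ← lintegral_add_left (f := fun z : (ℝ × ℝ) × ℝ × ℝ => c z.1)
        (hcm.comp measurable_fst) (fun z => c z.2)]
    congr 1
    apply lintegral_congr; intro z
    rw [hcdef, hFdef]
    simp only []
    rw [← ENNReal.ofReal_add (by positivity) (by positivity)]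
  have hcostm₂ : Wcost m₂ = 2⁻¹ * ∫⁻ z, ENNReal.ofReal (G z) ∂β := by
    rw [Wcost, hm₂def, lintegral_smul_measure, lintegral_add_measure,
      lintegral_map hcm hmS₁, lintegral_map hcm hmS₂,
      ← lintegral_add_left (f := fun z : (ℝ × ℝ) × ℝ × ℝ => c (S₁ z))
        (hcm.comp hmS₁) (fun z => c (S₂ z))]
    congr 1
    apply lintegral_congr; intro z
    rw [hcdef, hGdef, hS₁def, hS₂def]
    simp only []
    rw [← ENNReal.ofReal_add (by positivity) (by positivity)]
  -- a.e. on β : F = G + D and 0 < D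
  have hae : ∀ᵐ z ∂β, ENNReal.ofReal (F z) = ENNReal.ofReal (G z) + ENNReal.ofReal (D z)
      ∧ 0 < D z := by
    filter_upwards [ae_restrict_mem hB] with z hz
    have hzB : (z.1.1 - z.2.1) * (z.1.2 - z.2.2) < 0 := hz
    have hD : 0 < D z := by rw [hDdef]; simp only []; nlinarith
    refine ⟨?_, hD⟩
    rw [← ENNReal.ofReal_add (by rw [hGdef]; positivity) hD.le]
    congr 1
    rw [hFdef, hGdef, hDdef]
    simp only [Real.dist_eq, sq_abs]
    ring
  have hFGD : ∫⁻ z, ENNReal.ofReal (F z) ∂β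
      = ∫⁻ z, ENNReal.ofReal (G z) ∂β + ∫⁻ z, ENNReal.ofReal (D z) ∂β := by
    rw [← lintegral_add_left hGm]
    exact lintegral_congr_ae (hae.mono fun z h => h.1)
  -- finiteness
  have hm₁fin : Wcost m₁ < ⊤ := lt_of_le_of_lt (lintegral_mono' hm₁γ le_rfl) hfin
  have hFfin : ∫⁻ z, ENNReal.ofReal (F z) ∂β ≠ ⊤ := by
    intro hF
    rw [hcostm₁, hF, ENNReal.mul_top (by norm_num)] at hm₁fin
    exact absurd hm₁fin (lt_irrefl _)
  have hGfin : ∫⁻ z, ENNReal.ofReal (G z) ∂β ≠ ⊤ := by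
    intro hG
    apply hFfin
    rw [hFGD, hG, top_add]
  -- positivity of the gain
  have hDpos : ∫⁻ z, ENNReal.ofReal (D z) ∂β ≠ 0 := by
    intro h0
    have hz := (lintegral_eq_zero_iff hDm).mp h0
    have : ∀ᵐ z ∂β, False := by
      filter_upwards [hae, hz] with z h1 h2
      have : ENNReal.ofReal (D z) = 0 := h2
      rw [ENNReal.ofReal_eq_zero] at this
      exact absurd h1.2 (not_lt.mpr this)
    rw [Filter.eventually_false_iff_eq_bot, ae_eq_bot] at this
    apply hB0
    rw [← hβuniv, this]
    simp
  -- strict cost comparison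
  have hstrict : Wcost m₂ < Wcost m₁ := by
    rw [hcostm₁, hcostm₂, hFGD]
    have hlt : ∫⁻ z, ENNReal.ofReal (G z) ∂β
        < ∫⁻ z, ENNReal.ofReal (G z) ∂β + ∫⁻ z, ENNReal.ofReal (D z) ∂β :=
      ENNReal.lt_add_right hGfin hDpos
    exact (ENNReal.mul_lt_mul_iff_right (by norm_num) (by norm_num)).mpr hlt
  -- contradiction with optimality
  have hcostγ : Wcost γ = Wcost (γ - m₁) + Wcost m₁ := by
    have h := lintegral_add_measure (fun p : ℝ × ℝ => ENNReal.ofReal (dist p.1 p.2 ^ 2))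
      (γ - m₁) m₁
    rw [hsub] at h
    exact h
  have hcostγ' : Wcost γ' = Wcost (γ - m₁) + Wcost m₂ :=
    lintegral_add_measure _ _ _
  have hsubfin : Wcost (γ - m₁) ≠ ⊤ :=
    (lt_of_le_of_lt (lintegral_mono' Measure.sub_le le_rfl) hfin).ne
  have hlt : Wcost γ' < Wcost γ := by
    rw [hcostγ, hcostγ']
    exact ENNReal.add_lt_add_left hsubfin hstrict
  exact absurd (hopt γ' hγ'fst hγ'snd) (not_le.mpr hlt)

-- second moment implies integrability of the identity
lemma integrable_id_of_moment (μ : Measure ℝ) [IsProbabilityMeasure μ]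
    (h : ∫⁻ x, (‖x‖₊ : ℝ≥0∞) ^ 2 ∂μ < ⊤) : Integrable (fun x : ℝ => x) μ := by
  refine ⟨measurable_id.aestronglyMeasurable, ?_⟩
  have hbd : ∀ x : ℝ, (‖x‖₊ : ℝ≥0∞) ≤ (‖x‖₊ : ℝ≥0∞) ^ 2 + 1 := by
    intro x
    rcases le_total ((‖x‖₊ : ℝ≥0∞)) 1 with hx | hx
    · exact hx.trans le_add_self
    · calc (‖x‖₊ : ℝ≥0∞) = (‖x‖₊ : ℝ≥0∞) * 1 := (mul_one _).symm
        _ ≤ (‖x‖₊ : ℝ≥0∞) * (‖x‖₊ : ℝ≥0∞) := by gcongr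
        _ = (‖x‖₊ : ℝ≥0∞) ^ 2 := (sq _).symm
        _ ≤ _ := le_self_add
  calc ∫⁻ x, (‖x‖₊ : ℝ≥0∞) ∂μ ≤ ∫⁻ x, ((‖x‖₊ : ℝ≥0∞) ^ 2 + 1) ∂μ := lintegral_mono hbd
    _ = (∫⁻ x, (‖x‖₊ : ℝ≥0∞) ^ 2 ∂μ) + 1 := by
        rw [lintegral_add_right _ measurable_const, lintegral_one, measure_univ]
    _ < ⊤ := ENNReal.add_lt_top.mpr ⟨h, ENNReal.one_lt_top⟩

lemma integrable_absdiff (μ : Measure ℝ) [IsProbabilityMeasure μ]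
    (h : ∫⁻ x, (‖x‖₊ : ℝ≥0∞) ^ 2 ∂μ < ⊤) :
    Integrable (fun w : ℝ × ℝ => |w.1 - w.2|) (μ.prod μ) := by
  have hid := integrable_id_of_moment μ h
  have hmapf : (μ.prod μ).map Prod.fst = μ := by simp [Measure.map_fst_prod]
  have hmaps : (μ.prod μ).map Prod.snd = μ := by simp [Measure.map_snd_prod]
  have i1 : Integrable (fun w : ℝ × ℝ => w.1) (μ.prod μ) := by
    have := integrable_map_measure (μ := μ.prod μ) (f := Prod.fst)
      (g := fun x : ℝ => x) (by rw [hmapf]; exact measurable_id.aestronglyMeasurable)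
      measurable_fst.aemeasurable
    rw [hmapf] at this
    exact this.mp hid
  have i2 : Integrable (fun w : ℝ × ℝ => w.2) (μ.prod μ) := by
    have := integrable_map_measure (μ := μ.prod μ) (f := Prod.snd)
      (g := fun x : ℝ => x) (by rw [hmaps]; exact measurable_id.aestronglyMeasurable)
      measurable_snd.aemeasurable
    rw [hmaps] at this
    exact this.mp hid
  exact (i1.sub i2).abs

end LfunAux

open LfunAux in
/-- In dimension one, `ℒ` is affine along Wasserstein geodesics
`μ_θ = ((1-θ)π¹ + θπ²)_# γ` for an optimal plan `γ`; in particular it is geodesically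
convex for every `η ∈ ℝ`. -/
theorem Lfun_affine_along_geodesics (η : ℝ) (μ₁ μ₂ : Measure ℝ)
    [IsProbabilityMeasure μ₁] [IsProbabilityMeasure μ₂]
    (h₁ : ∫⁻ x, (‖x‖₊ : ℝ≥0∞) ^ 2 ∂μ₁ < ⊤)
    (h₂ : ∫⁻ x, (‖x‖₊ : ℝ≥0∞) ^ 2 ∂μ₂ < ⊤)
    (γ : Measure (ℝ × ℝ))
    (hγ₁ : γ.map Prod.fst = μ₁) (hγ₂ : γ.map Prod.snd = μ₂)
    (hopt : ∫⁻ p, ENNReal.ofReal (dist p.1 p.2 ^ 2) ∂γ = sqW2 μ₁ μ₂)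
    (θ : ℝ) (hθ : θ ∈ Set.Icc (0 : ℝ) 1) :
    Lfun η (γ.map fun p => (1 - θ) * p.1 + θ * p.2) =
      (1 - θ) * Lfun η μ₁ + θ * Lfun η μ₂ := by
  obtain ⟨hθ0, hθ1⟩ := hθ
  haveI hγprob : IsProbabilityMeasure γ := by
    constructor
    have e : γ Set.univ = (γ.map Prod.fst) Set.univ := by
      rw [Measure.map_apply measurable_fst MeasurableSet.univ, Set.preimage_univ]
    rw [e, hγ₁, measure_univ]
  -- the optimal cost is finite
  have hnn2 : Measurable fun x : ℝ => (‖x‖₊ : ℝ≥0∞) ^ 2 :=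
    (measurable_nnnorm.coe_nnreal_ennreal).pow_const 2
  have hWμ : Wcost (μ₁.prod μ₂) < ⊤ := by
    have hb : ∀ p : ℝ × ℝ, ENNReal.ofReal (dist p.1 p.2 ^ 2)
        ≤ 2 * ((‖p.1‖₊ : ℝ≥0∞) ^ 2 + (‖p.2‖₊ : ℝ≥0∞) ^ 2) := by
      intro p
      calc ENNReal.ofReal (dist p.1 p.2 ^ 2)
          ≤ ENNReal.ofReal (2 * p.1 ^ 2 + 2 * p.2 ^ 2) := by
            apply ENNReal.ofReal_le_ofReal
            rw [Real.dist_eq, sq_abs]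
            nlinarith [sq_nonneg (p.1 + p.2)]
        _ = ENNReal.ofReal (2 * p.1 ^ 2) + ENNReal.ofReal (2 * p.2 ^ 2) := by
            rw [ENNReal.ofReal_add (by positivity) (by positivity)]
        _ = 2 * ((‖p.1‖₊ : ℝ≥0∞) ^ 2 + (‖p.2‖₊ : ℝ≥0∞) ^ 2) := by
            rw [ENNReal.ofReal_mul (by norm_num), ENNReal.ofReal_mul (by norm_num),
              ofReal_sq, ofReal_sq, mul_add]
            norm_num
    have e1 : ∫⁻ p : ℝ × ℝ, (‖p.1‖₊ : ℝ≥0∞) ^ 2 ∂(μ₁.prod μ₂)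
        = ∫⁻ x, (‖x‖₊ : ℝ≥0∞) ^ 2 ∂μ₁ := by
      rw [← lintegral_map hnn2 measurable_fst, Measure.map_fst_prod, measure_univ, one_smul]
    have e2 : ∫⁻ p : ℝ × ℝ, (‖p.2‖₊ : ℝ≥0∞) ^ 2 ∂(μ₁.prod μ₂)
        = ∫⁻ x, (‖x‖₊ : ℝ≥0∞) ^ 2 ∂μ₂ := by
      rw [← lintegral_map hnn2 measurable_snd, Measure.map_snd_prod, measure_univ, one_smul]
    calc Wcost (μ₁.prod μ₂)
        ≤ ∫⁻ p, 2 * ((‖p.1‖₊ : ℝ≥0∞) ^ 2 + (‖p.2‖₊ : ℝ≥0∞) ^ 2) ∂(μ₁.prod μ₂) :=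
          lintegral_mono hb
      _ = 2 * ((∫⁻ x, (‖x‖₊ : ℝ≥0∞) ^ 2 ∂μ₁) + ∫⁻ x, (‖x‖₊ : ℝ≥0∞) ^ 2 ∂μ₂) := by
          have hm1' : Measurable fun p : ℝ × ℝ => (‖p.1‖₊ : ℝ≥0∞) ^ 2 :=
            measurable_fst.nnnorm.coe_nnreal_ennreal.pow_const 2
          have hm2' : Measurable fun p : ℝ × ℝ => (‖p.2‖₊ : ℝ≥0∞) ^ 2 :=
            measurable_snd.nnnorm.coe_nnreal_ennreal.pow_const 2
          rw [lintegral_const_mul 2 (f := fun p : ℝ × ℝ => (‖p.1‖₊ : ℝ≥0∞) ^ 2 + (‖p.2‖₊ : ℝ≥0∞) ^ 2) (hm1'.add hm2'), lintegral_add_left hm1', e1, e2]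
      _ < ⊤ := by
          apply ENNReal.mul_lt_top (by norm_num)
          exact ENNReal.add_lt_top.mpr ⟨h₁, h₂⟩
  have hsqle : sqW2 μ₁ μ₂ ≤ Wcost (μ₁.prod μ₂) := by
    refine iInf_le_of_le (μ₁.prod μ₂) (iInf_le_of_le ?_ (iInf_le_of_le ?_ le_rfl))
    · rw [Measure.map_fst_prod, measure_univ, one_smul]
    · rw [Measure.map_snd_prod, measure_univ, one_smul]
  have hWγ : Wcost γ = sqW2 μ₁ μ₂ := hopt
  have hfin : Wcost γ < ⊤ := by
    rw [hWγ]; exact lt_of_le_of_lt hsqle hWμ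
  have hle : ∀ γ' : Measure (ℝ × ℝ), γ'.map Prod.fst = μ₁ → γ'.map Prod.snd = μ₂ →
      Wcost γ ≤ Wcost γ' := by
    intro γ' ha hb
    rw [hWγ]
    exact iInf_le_of_le γ' (iInf_le_of_le ha (iInf_le_of_le hb le_rfl))
  have hbad := prod_bad_null μ₁ μ₂ γ hγ₁ hγ₂ hfin hle
  -- set up the interpolation map
  set T : ℝ × ℝ → ℝ := fun p => (1 - θ) * p.1 + θ * p.2 with hTdef
  have hT : Measurable T := (measurable_fst.const_mul (1 - θ)).add (measurable_snd.const_mul θ)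
  haveI : IsProbabilityMeasure (γ.map T) := Measure.isProbabilityMeasure_map hT.aemeasurable
  have hmapθ : (γ.map T).prod (γ.map T) = (γ.prod γ).map (Prod.map T T) :=
    Measure.map_prod_map γ γ hT hT
  have hmap1 : μ₁.prod μ₁ = (γ.prod γ).map (Prod.map Prod.fst Prod.fst) := by
    rw [← hγ₁]; exact Measure.map_prod_map γ γ measurable_fst measurable_fst
  have hmap2 : μ₂.prod μ₂ = (γ.prod γ).map (Prod.map Prod.snd Prod.snd) := by
    rw [← hγ₂]; exact Measure.map_prod_map γ γ measurable_snd measurable_snd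
  have hcont : AEStronglyMeasurable (fun w : ℝ × ℝ => |w.1 - w.2|)
      ((γ.prod γ).map (Prod.map Prod.fst Prod.fst)) :=
    ((continuous_fst.sub continuous_snd).abs).aestronglyMeasurable
  have hcont2 : AEStronglyMeasurable (fun w : ℝ × ℝ => |w.1 - w.2|)
      ((γ.prod γ).map (Prod.map Prod.snd Prod.snd)) :=
    ((continuous_fst.sub continuous_snd).abs).aestronglyMeasurable
  -- integrability of the two coordinate differences
  have hD1 : Integrable (fun z : (ℝ × ℝ) × ℝ × ℝ => |z.1.1 - z.2.1|) (γ.prod γ) := by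
    have h := (integrable_map_measure hcont
      ((measurable_fst.prodMap measurable_fst).aemeasurable)).mp
      (by rw [← hmap1]; exact integrable_absdiff μ₁ h₁)
    exact h
  have hD2 : Integrable (fun z : (ℝ × ℝ) × ℝ × ℝ => |z.1.2 - z.2.2|) (γ.prod γ) := by
    have h := (integrable_map_measure hcont2
      ((measurable_snd.prodMap measurable_snd).aemeasurable)).mp
      (by rw [← hmap2]; exact integrable_absdiff μ₂ h₂)
    exact h
  -- transfer the integrals
  have hI1 : ∫ p, |p.1 - p.2| ∂(μ₁.prod μ₁) = ∫ z, |z.1.1 - z.2.1| ∂(γ.prod γ) := by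
    rw [hmap1, integral_map (measurable_fst.prodMap measurable_fst).aemeasurable hcont]
    rfl
  have hI2 : ∫ p, |p.1 - p.2| ∂(μ₂.prod μ₂) = ∫ z, |z.1.2 - z.2.2| ∂(γ.prod γ) := by
    rw [hmap2, integral_map (measurable_snd.prodMap measurable_snd).aemeasurable hcont2]
    rfl
  have hIθ : ∫ p, |p.1 - p.2| ∂((γ.map T).prod (γ.map T))
      = ∫ z, |T z.1 - T z.2| ∂(γ.prod γ) := by
    rw [hmapθ, integral_map (hT.prodMap hT).aemeasurable
      (show AEStronglyMeasurable (fun w : ℝ × ℝ => |w.1 - w.2|) _ from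
        ((continuous_fst.sub continuous_snd).abs).aestronglyMeasurable)]
    rfl
  -- a.e. affine identity
  have haez : ∀ᵐ z ∂(γ.prod γ),
      |T z.1 - T z.2| = (1 - θ) * |z.1.1 - z.2.1| + θ * |z.1.2 - z.2.2| := by
    have h0 : ∀ᵐ z ∂(γ.prod γ), ¬((z.1.1 - z.2.1) * (z.1.2 - z.2.2) < 0) := by
      rw [ae_iff]
      simpa only [not_not] using hbad
    filter_upwards [h0] with z hz
    have hz' : 0 ≤ (z.1.1 - z.2.1) * (z.1.2 - z.2.2) := not_lt.mp hz
    have e : T z.1 - T z.2 = (1 - θ) * (z.1.1 - z.2.1) + θ * (z.1.2 - z.2.2) := by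
      simp only [hTdef]; ring
    rw [e, abs_lin (by linarith) hθ0 hz']
  calc Lfun η (γ.map T)
      = η * ∫ z, |T z.1 - T z.2| ∂(γ.prod γ) := by rw [Lfun, hIθ]
    _ = η * ∫ z, ((1 - θ) * |z.1.1 - z.2.1| + θ * |z.1.2 - z.2.2|) ∂(γ.prod γ) := by
        rw [integral_congr_ae haez]
    _ = η * ((1 - θ) * ∫ z, |z.1.1 - z.2.1| ∂(γ.prod γ)
          + θ * ∫ z, |z.1.2 - z.2.2| ∂(γ.prod γ)) := by
        rw [integral_add (hD1.const_mul _) (hD2.const_mul _),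
          integral_const_mul, integral_const_mul]
    _ = (1 - θ) * Lfun η μ₁ + θ * Lfun η μ₂ := by
        rw [Lfun, Lfun, hI1, hI2]; ring
end

section
/- In one dimension with W(x) = -|x| and initial datum μ₀ = ½δ_{x₁} + ½δ_{x₂} with x₁ < x₂, the curve μ(t) = (1/2t)𝟙_{(x₁-t, x₁)} + (1/2t)𝟙_{(x₂, x₂+t)} (for 0 < t < small enough that the supports stay ordered) solves the rearrangement equation ∂_t X(t,z) = ∫₀¹ -sign(X(t,ξ) - X(t,z)) dξ, with X(t,z) = x₁ + t(2z-1) for z ∈ (0,½) and X(t,z) = x₂ + t(2z-1) for z ∈ (½,1). -/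
open MeasureTheory
open scoped ENNReal

/-- The piecewise affine monotone rearrangement of
`μ(t) = (1/2t)𝟙_{(x₁-t, x₁)} + (1/2t)𝟙_{(x₂, x₂+t)}`. -/
noncomputable def Xpiece (x₁ x₂ t z : ℝ) : ℝ :=
  if z < 1 / 2 then x₁ + t * (2 * z - 1) else x₂ + t * (2 * z - 1)

lemma Xpiece_strictMono (x₁ x₂ t : ℝ) (hx : x₁ < x₂) (ht : 0 < t) :
    StrictMono (Xpiece x₁ x₂ t) := by
  intro a b hab
  unfold Xpiece
  by_cases ha : a < 1 / 2 <;> by_cases hb : b < 1 / 2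
  · rw [if_pos ha, if_pos hb]; nlinarith
  · rw [if_pos ha, if_neg hb]; nlinarith
  · exact absurd hab (not_lt.2 (hb.le.trans (not_lt.1 ha)))
  · rw [if_neg ha, if_neg hb]; nlinarith

lemma Xpiece_measurable (x₁ x₂ t : ℝ) : Measurable (Xpiece x₁ x₂ t) := by
  unfold Xpiece
  exact Measurable.ite measurableSet_Iio (by fun_prop) (by fun_prop)

lemma map_affine_restrict (a c : ℝ) (hc : 0 < c) (s : Set ℝ) (hs : MeasurableSet s) :
    Measure.map (fun z => a + c * z) (volume.restrict ((fun z => a + c * z) ⁻¹' s)) =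
      ENNReal.ofReal c⁻¹ • volume.restrict s := by
  have hmeas : Measurable (fun z : ℝ => a + c * z) := by fun_prop
  rw [← Measure.restrict_map hmeas hs]
  have hmap : Measure.map (fun z : ℝ => a + c * z) volume
      = ENNReal.ofReal c⁻¹ • volume := by
    have h1 : (fun z : ℝ => a + c * z) = (fun y : ℝ => a + y) ∘ (fun z : ℝ => c * z) := rfl
    rw [h1, ← Measure.map_map (by fun_prop) (by fun_prop),
      Real.map_volume_mul_left hc.ne', Measure.map_smul,
      map_add_left_eq_self volume a, abs_of_pos (inv_pos.2 hc)]
  rw [hmap, Measure.restrict_smul]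

/-- For `W(x) = -|x|` with initial datum `½δ_{x₁} + ½δ_{x₂}` (`x₁ < x₂`), the curve
with rearrangement `X(t,z) = x₁ + t(2z-1)` for `z < ½` and `x₂ + t(2z-1)` for `z > ½`
solves the rearrangement equation `∂_t X(t,z) = ∫₀¹ -sign(X(t,ξ) - X(t,z)) dξ = 2z-1`,
and `X(t,·)` pushes Lebesgue measure on `(0,1)` forward to
`(1/2t)𝟙_{(x₁-t,x₁)} + (1/2t)𝟙_{(x₂,x₂+t)}`. -/
theorem two_diracs_diffuse (x₁ x₂ t : ℝ) (hx : x₁ < x₂) (ht : 0 < t)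
    (hts : t < x₂ - x₁) :
    (∀ z ∈ Set.Ioo (0 : ℝ) 1, z ≠ 1 / 2 →
      (∫ ξ in Set.Ioo (0 : ℝ) 1, -Real.sign (Xpiece x₁ x₂ t ξ - Xpiece x₁ x₂ t z)) =
          2 * z - 1 ∧
      HasDerivAt (fun τ => Xpiece x₁ x₂ τ z) (2 * z - 1) t) ∧
    (volume.restrict (Set.Ioo (0 : ℝ) 1)).map (Xpiece x₁ x₂ t) =
      volume.withDensity
        (fun x => Set.indicator (Set.Ioo (x₁ - t) x₁) (fun _ => ENNReal.ofReal (1 / (2 * t))) x +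
          Set.indicator (Set.Ioo x₂ (x₂ + t)) (fun _ => ENNReal.ofReal (1 / (2 * t))) x) := by
  have hmono := Xpiece_strictMono x₁ x₂ t hx ht
  constructor
  · intro z hz hz2
    constructor
    · -- the integral
      have hz0 : ∀ᵐ ξ : ℝ, ξ ≠ z := by
        rw [ae_iff]
        simp only [ne_eq, not_not, Set.setOf_eq_eq_singleton]
        exact Real.volume_singleton
      have hae : ∀ᵐ ξ : ℝ, ξ ∈ Set.Ioo (0 : ℝ) 1 →
          -Real.sign (Xpiece x₁ x₂ t ξ - Xpiece x₁ x₂ t z)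
            = Set.indicator (Set.Iio z) (fun _ => (2 : ℝ)) ξ - 1 := by
        filter_upwards [hz0] with ξ hξ _
        rcases lt_trichotomy ξ z with h | h | h
        · have := hmono h
          rw [Real.sign_of_neg (by linarith), Set.indicator_of_mem (Set.mem_Iio.2 h)]
          norm_num
        · exact absurd h hξ
        · have := hmono h
          rw [Real.sign_of_pos (by linarith),
            Set.indicator_of_notMem (by simp only [Set.mem_Iio, not_lt]; linarith)]
          norm_num
      rw [setIntegral_congr_ae measurableSet_Ioo hae]
      have hint1 : IntegrableOn (Set.indicator (Set.Iio z) (fun _ => (2 : ℝ)))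
          (Set.Ioo (0 : ℝ) 1) := by
        apply Integrable.indicator _ measurableSet_Iio
        exact integrableOn_const (by simp)
      rw [integral_sub hint1 (integrableOn_const (by simp))]
      rw [setIntegral_indicator measurableSet_Iio]
      have h1 : Set.Ioo (0 : ℝ) 1 ∩ Set.Iio z = Set.Ioo 0 z := by
        ext ξ; simp only [Set.mem_inter_iff, Set.mem_Ioo, Set.mem_Iio]
        constructor
        · rintro ⟨⟨h1, h2⟩, h3⟩; exact ⟨h1, h3⟩
        · rintro ⟨h1, h2⟩; exact ⟨⟨h1, lt_trans h2 hz.2⟩, h2⟩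
      rw [h1]
      simp [Real.volume_Ioo, ENNReal.toReal_ofReal hz.1.le, hz.1.le]
      ring
    · -- the derivative
      by_cases h : z < 1 / 2
      · simp only [Xpiece, if_pos h]
        exact (hasDerivAt_mul_const (2 * z - 1)).const_add x₁
      · simp only [Xpiece, if_neg h]
        exact (hasDerivAt_mul_const (2 * z - 1)).const_add x₂
  · -- the pushforward
    have hXm := Xpiece_measurable x₁ x₂ t
    have h2t : (0 : ℝ) < 2 * t := by linarith
    have hdisj : Disjoint (Set.Ioo (0 : ℝ) (1 / 2)) (Set.Ioo (1 / 2 : ℝ) 1) := by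
      rw [Set.disjoint_left]
      rintro ξ ⟨_, h2⟩ ⟨h3, _⟩
      linarith
    have hsplit : volume.restrict (Set.Ioo (0 : ℝ) 1)
        = volume.restrict (Set.Ioo (0 : ℝ) (1 / 2)) + volume.restrict (Set.Ioo (1 / 2 : ℝ) 1) := by
      rw [← Measure.restrict_union hdisj measurableSet_Ioo]
      apply Measure.restrict_congr_set
      rw [MeasureTheory.ae_eq_set]
      constructor
      · refine measure_mono_null ?_ (Real.volume_singleton (a := 1 / 2))
        rintro ξ ⟨⟨h0, h1'⟩, hnot⟩
        rw [Set.mem_union] at hnot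
        push_neg at hnot
        have ha : ¬(0 < ξ ∧ ξ < 1 / 2) := by simpa [Set.mem_Ioo] using hnot.1
        have hb : ¬(1 / 2 < ξ ∧ ξ < 1) := by simpa [Set.mem_Ioo] using hnot.2
        have h1 : 1 / 2 ≤ ξ := by by_contra h; push_neg at h; exact ha ⟨h0, h⟩
        have h2 : ξ ≤ 1 / 2 := by by_contra h; push_neg at h; exact hb ⟨h, h1'⟩
        exact Set.mem_singleton_iff.2 (le_antisymm h2 h1)
      · refine measure_mono_null ?_ (measure_empty (μ := (volume : Measure ℝ)))
        intro ξ hξ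
        simp only [Set.mem_diff, Set.mem_union, Set.mem_Ioo] at hξ
        rcases hξ.1 with ⟨h1, h2⟩ | ⟨h1, h2⟩ <;> exact absurd ⟨by linarith, by linarith⟩ hξ.2
    rw [hsplit, Measure.map_add _ _ hXm]
    have hmap1 : Measure.map (Xpiece x₁ x₂ t) (volume.restrict (Set.Ioo (0 : ℝ) (1 / 2)))
        = ENNReal.ofReal (2 * t)⁻¹ • volume.restrict (Set.Ioo (x₁ - t) x₁) := by
      have hcongr : Xpiece x₁ x₂ t
          =ᵐ[volume.restrict (Set.Ioo (0 : ℝ) (1 / 2))] (fun z => (x₁ - t) + 2 * t * z) := by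
        refine (ae_restrict_iff' measurableSet_Ioo).2 (Filter.Eventually.of_forall fun z hz => ?_)
        simp only [Xpiece, if_pos hz.2]; ring
      rw [Measure.map_congr hcongr]
      have hpre : Set.Ioo (0 : ℝ) (1 / 2)
          = (fun z => (x₁ - t) + 2 * t * z) ⁻¹' Set.Ioo (x₁ - t) x₁ := by
        ext z; simp only [Set.mem_preimage, Set.mem_Ioo]
        constructor
        · rintro ⟨h1, h2⟩; constructor <;> nlinarith
        · rintro ⟨h1, h2⟩; constructor <;> nlinarith
      rw [hpre, map_affine_restrict _ _ h2t _ measurableSet_Ioo]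
    have hmap2 : Measure.map (Xpiece x₁ x₂ t) (volume.restrict (Set.Ioo (1 / 2 : ℝ) 1))
        = ENNReal.ofReal (2 * t)⁻¹ • volume.restrict (Set.Ioo x₂ (x₂ + t)) := by
      have hcongr : Xpiece x₁ x₂ t
          =ᵐ[volume.restrict (Set.Ioo (1 / 2 : ℝ) 1)] (fun z => (x₂ - t) + 2 * t * z) := by
        refine (ae_restrict_iff' measurableSet_Ioo).2 (Filter.Eventually.of_forall fun z hz => ?_)
        simp only [Xpiece, if_neg (not_lt.2 hz.1.le)]; ring
      rw [Measure.map_congr hcongr]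
      have hpre : Set.Ioo (1 / 2 : ℝ) 1
          = (fun z => (x₂ - t) + 2 * t * z) ⁻¹' Set.Ioo x₂ (x₂ + t) := by
        ext z; simp only [Set.mem_preimage, Set.mem_Ioo]
        constructor
        · rintro ⟨h1, h2⟩; constructor <;> nlinarith
        · rintro ⟨h1, h2⟩; constructor <;> nlinarith
      rw [hpre, map_affine_restrict _ _ h2t _ measurableSet_Ioo]
    rw [hmap1, hmap2]
    have hfun : (fun x => Set.indicator (Set.Ioo (x₁ - t) x₁)
          (fun _ => ENNReal.ofReal (1 / (2 * t))) x +
        Set.indicator (Set.Ioo x₂ (x₂ + t)) (fun _ => ENNReal.ofReal (1 / (2 * t))) x)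
        = Set.indicator (Set.Ioo (x₁ - t) x₁) (fun _ => ENNReal.ofReal (1 / (2 * t)))
          + Set.indicator (Set.Ioo x₂ (x₂ + t)) (fun _ => ENNReal.ofReal (1 / (2 * t))) := rfl
    rw [hfun, withDensity_add_left ((measurable_const.indicator measurableSet_Ioo))]
    rw [withDensity_indicator measurableSet_Ioo, withDensity_indicator measurableSet_Ioo,
      withDensity_const, withDensity_const]
    rw [one_div]
end
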